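/- Let 𝒢 be a signed graph on [n] with half-edges allowed, and let 𝒢′ be the signed graph obtained by removing the half-edges. Then 𝒢′ is balanced (no loops and every cycle has an even number of positive edges) if and only if the incidence matrix I(𝒢), whose columns are the vectors Γ(e) for edges e of 𝒢 (e_i − e_j for negative edges, e_i + e_j for positive edges, e_i for half-edges), is totally unimodular. -/

import Mathlib

open Finset

/-- A signed graph on `[n]` with negative edges, positive edges and half-edges. -/
structure SignedGraphH (n : ℕ) where
  Eneg : Finset (Fin n × Fin n)
  Epos : Finset (Fin n × Fin n)
  H : Finset (Fin n)

/-- Index type for the edges (columns of the incidence matrix). -/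
def EdgeIdx {n : ℕ} (G : SignedGraphH n) : Type :=
  {p // p ∈ G.Eneg} ⊕ {p // p ∈ G.Epos} ⊕ {i // i ∈ G.H}

instance {n : ℕ} (G : SignedGraphH n) : Fintype (EdgeIdx G) := by
  unfold EdgeIdx; infer_instance

instance {n : ℕ} (G : SignedGraphH n) : DecidableEq (EdgeIdx G) := by
  unfold EdgeIdx; infer_instance

/-- The incidence matrix of the signed graph: columns are the vectors `Γ(e)`,
namely `eᵢ - eⱼ` for negative edges, `eᵢ + eⱼ` for positive edges, and `eᵢ`
for half-edges. -/
def incidenceMatrix {n : ℕ} (G : SignedGraphH n) : Matrix (Fin n) (EdgeIdx G) ℝ :=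
  fun k e =>
    match e with
    | Sum.inl ⟨p, _⟩ => (if k = p.1 then 1 else 0) - (if k = p.2 then 1 else 0)
    | Sum.inr (Sum.inl ⟨p, _⟩) => (if k = p.1 then 1 else 0) + (if k = p.2 then 1 else 0)
    | Sum.inr (Sum.inr ⟨i, _⟩) => if k = i then 1 else 0

/-- A matrix is totally unimodular if every square submatrix (given by injective
row and column selections) has determinant in `{-1, 0, 1}`. -/
def IsTotallyUnimodular {n : ℕ} {ι : Type*} [DecidableEq ι]
    (M : Matrix (Fin n) ι ℝ) : Prop :=
  ∀ (k : ℕ) (f : Fin k → Fin n) (g : Fin k → ι),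
    Function.Injective f → Function.Injective g →
      (M.submatrix f g).det = 1 ∨ (M.submatrix f g).det = 0 ∨
        (M.submatrix f g).det = -1

/-- `G` (with half-edges removed) contains a cycle with an odd number of
positive edges. -/
def HasOddPositiveCycle {n : ℕ} (G : SignedGraphH n) : Prop :=
  ∃ (m : ℕ) (v : Fin (m + 2) → Fin n) (sgn : Fin (m + 2) → Bool),
    Function.Injective v ∧
    (∀ k : Fin (m + 2),
      if sgn k then ((v k, v (k + 1)) ∈ G.Epos ∨ (v (k + 1), v k) ∈ G.Epos)
      else ((v k, v (k + 1)) ∈ G.Eneg ∨ (v (k + 1), v k) ∈ G.Eneg)) ∧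
    (∀ k l : Fin (m + 2), k ≠ l →
      s(v k, v (k + 1)) = s(v l, v (l + 1)) → sgn k ≠ sgn l) ∧
    (univ.filter (fun k => sgn k = true)).card % 2 = 1

namespace HTaux

open SimpleGraph

variable {n : ℕ}

/-- positive adjacency -/
def posAdj (G : SignedGraphH n) (i j : Fin n) : Prop :=
  (i, j) ∈ G.Epos ∨ (j, i) ∈ G.Epos

def negAdj (G : SignedGraphH n) (i j : Fin n) : Prop :=
  (i, j) ∈ G.Eneg ∨ (j, i) ∈ G.Eneg

instance (G : SignedGraphH n) (i j : Fin n) : Decidable (posAdj G i j) := by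
  unfold posAdj; infer_instance

lemma posAdj_symm (G : SignedGraphH n) {i j : Fin n} (h : posAdj G i j) : posAdj G j i := h.symm

/-- the underlying simple graph -/
def SG (G : SignedGraphH n) : SimpleGraph (Fin n) where
  Adj i j := i ≠ j ∧ (negAdj G i j ∨ posAdj G i j)
  symm := by
    constructor
    rintro i j ⟨h1, h2⟩
    refine ⟨h1.symm, ?_⟩
    unfold negAdj posAdj at *; tauto
  loopless := ⟨fun i h => h.1 rfl⟩

/-- parity weight of a potential edge -/
def wf (G : SignedGraphH n) (i j : Fin n) : ZMod 2 := if posAdj G i j then 1 else 0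

lemma wf_symm (G : SignedGraphH n) (i j : Fin n) : wf G i j = wf G j i := by
  unfold wf
  by_cases h : posAdj G i j
  · rw [if_pos h, if_pos (posAdj_symm G h)]
  · rw [if_neg h, if_neg (fun hc => h (posAdj_symm G hc))]

def wS (G : SignedGraphH n) : Sym2 (Fin n) → ZMod 2 :=
  Sym2.lift ⟨wf G, wf_symm G⟩

@[simp] lemma wS_mk (G : SignedGraphH n) (i j : Fin n) : wS G s(i, j) = wf G i j := rfl

/-- parity of a walk -/
def par (G : SignedGraphH n) {u v : Fin n} (W : (SG G).Walk u v) : ZMod 2 :=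
  (W.edges.map (wS G)).sum

@[simp] lemma par_nil (G : SignedGraphH n) {u : Fin n} : par G (Walk.nil : (SG G).Walk u u) = 0 := rfl

lemma par_cons (G : SignedGraphH n) {u v w : Fin n} (h : (SG G).Adj u v) (W : (SG G).Walk v w) :
    par G (Walk.cons h W) = wf G u v + par G W := by
  simp [par, Walk.edges_cons]

lemma par_append (G : SignedGraphH n) {u v w : Fin n} (P : (SG G).Walk u v) (Q : (SG G).Walk v w) :
    par G (P.append Q) = par G P + par G Q := by
  simp [par, Walk.edges_append]

lemma par_reverse (G : SignedGraphH n) {u v : Fin n} (P : (SG G).Walk u v) :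
    par G P.reverse = par G P := by
  simp only [par, Walk.edges_reverse, List.map_reverse]
  exact List.sum_reverse _

lemma par_rotate (G : SignedGraphH n) {u x : Fin n} (W : (SG G).Walk u u)
    (hx : x ∈ W.support) : par G (W.rotate x hx) = par G W := by
  unfold par
  exact List.Perm.sum_eq (List.Perm.map _ (W.rotate_edges x hx).perm)

lemma par_eq_sum_range (G : SignedGraphH n) {u v : Fin n} (W : (SG G).Walk u v) :
    par G W = ∑ i ∈ Finset.range W.length, wf G (W.getVert i) (W.getVert (i + 1)) := by
  induction W with
  | nil => simp [par]
  | cons h P ih =>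
    rw [par_cons, ih]
    rw [Walk.length_cons, Finset.sum_range_succ']
    simp only [Walk.getVert_cons_succ, Walk.getVert_zero]
    rw [add_comm]

lemma support_eq_map (G : SignedGraphH n) {u v : Fin n} (W : (SG G).Walk u v) :
    W.support = (List.range (W.length + 1)).map W.getVert := by
  induction W with
  | nil => simp [Walk.getVert]
  | cons h P ih =>
    rw [Walk.support_cons, ih, Walk.length_cons]
    conv_rhs => rw [List.range_succ_eq_map]
    rw [List.map_cons, List.map_map, Walk.getVert_zero]
    congr 1


lemma my_length_rotate {V : Type*} {G : SimpleGraph V} [DecidableEq V] {u v : V}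
    (c : G.Walk v v) (h : u ∈ c.support) : (c.rotate u h).length = c.length := by
  have h2 := congrArg Walk.length (c.take_spec h)
  rw [Walk.length_append] at h2
  unfold Walk.rotate
  rw [Walk.length_append]
  omega

lemma getVert_inj (G : SignedGraphH n) {u : Fin n} (W : (SG G).Walk u u)
    (hnd : W.support.tail.Nodup) (hL : 1 ≤ W.length) :
    ∀ i j, i < W.length → j < W.length → W.getVert i = W.getVert j → i = j := by
  have htail : W.support.tail = (List.range W.length).map (fun i => W.getVert (i + 1)) := by
    rw [support_eq_map]
    conv_lhs => rw [List.range_succ_eq_map]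
    rw [List.map_cons, List.map_map]
    rfl
  have hP : List.Pairwise (· ≠ ·) W.support.tail := hnd
  rw [htail] at hP
  rw [List.pairwise_iff_getElem] at hP
  have key : ∀ a b, a < W.length → b < W.length → a < b →
      W.getVert (a + 1) ≠ W.getVert (b + 1) := by
    intro a b ha hb hab
    have := hP a b (by simpa using ha) (by simpa using hb) hab
    simpa using this
  intro i j hi hj hij
  by_contra hne
  rcases Nat.lt_or_ge i j with hlt | hge
  · rcases Nat.eq_zero_or_pos i with h0 | h1
    · subst h0
      rw [Walk.getVert_zero] at hij
      -- W.getVert j = u with 1 ≤ j < L; also W.getVert L = u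
      rcases Nat.lt_or_ge j W.length with hjL | hjL
      · have hj1 : j - 1 < W.length := by omega
        have := key (j - 1) (W.length - 1) (by omega) (by omega) (by omega)
        rw [Nat.sub_add_cancel (by omega), Nat.sub_add_cancel (by omega),
          Walk.getVert_length] at this
        exact this hij.symm
      · omega
    · have := key (i - 1) (j - 1) (by omega) (by omega) (by omega)
      rw [Nat.sub_add_cancel (by omega), Nat.sub_add_cancel (by omega)] at this
      exact this hij
  · have hlt : j < i := by omega
    rcases Nat.eq_zero_or_pos j with h0 | h1
    · subst h0
      rw [Walk.getVert_zero] at hij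
      have := key (i - 1) (W.length - 1) (by omega) (by omega) (by omega)
      rw [Nat.sub_add_cancel (by omega), Nat.sub_add_cancel (by omega),
        Walk.getVert_length] at this
      exact this hij
    · have := key (j - 1) (i - 1) (by omega) (by omega) (by omega)
      rw [Nat.sub_add_cancel (by omega), Nat.sub_add_cancel (by omega)] at this
      exact this hij.symm

lemma cycle_to_odd (G : SignedGraphH n) {u : Fin n} (W : (SG G).Walk u u)
    (hnd : W.support.tail.Nodup) (hL : 3 ≤ W.length) (hpar : par G W = 1) :
    HasOddPositiveCycle G := by
  obtain ⟨m, hm⟩ : ∃ m, W.length = m + 2 := ⟨W.length - 2, by omega⟩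
  have hm1 : 1 ≤ m := by omega
  set v : Fin (m + 2) → Fin n := fun k => W.getVert k.val with hv
  have hv1 : ∀ k : Fin (m + 2), v (k + 1) = W.getVert (k.val + 1) := by
    intro k
    by_cases hk : k.val < m + 1
    · have hval : ((k + 1 : Fin (m + 2))).val = k.val + 1 := by
        rw [Fin.add_def]
        simp only [Fin.val_one]
        exact Nat.mod_eq_of_lt (by omega)
      show W.getVert ((k + 1 : Fin (m + 2))).val = _
      rw [hval]
    · have hk' : k.val = m + 1 := by omega
      have h1 : (k + 1 : Fin (m + 2)) = 0 := by
        apply Fin.ext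
        rw [Fin.add_def]
        simp only [Fin.val_one, Fin.val_zero]
        rw [hk', show m + 1 + 1 = m + 2 from rfl]
        exact Nat.mod_self _
      rw [h1]
      show W.getVert 0 = W.getVert (k.val + 1)
      rw [Walk.getVert_zero, hk', ← hm, Walk.getVert_length]
  have hadj : ∀ k : Fin (m + 2), (SG G).Adj (v k) (v (k + 1)) := by
    intro k
    rw [hv1]
    exact W.adj_getVert_succ (by omega)
  have hinj : Function.Injective v := by
    intro k l hkl
    apply Fin.ext
    exact getVert_inj G W hnd (by omega) k.val l.val (by omega) (by omega) hkl
  set sgn : Fin (m + 2) → Bool := fun k => decide (posAdj G (v k) (v (k + 1))) with hsgn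
  have hone : (1 : Fin (m + 2)) ≠ 0 := by
    intro h
    have := congrArg Fin.val h
    simp only [Fin.val_one, Fin.val_zero] at this
    omega
  refine ⟨m, v, sgn, hinj, ?_, ?_, ?_⟩
  · intro k
    by_cases hp : posAdj G (v k) (v (k + 1))
    · have : sgn k = true := by simp [hsgn, hp]
      rw [this, if_pos rfl]
      exact hp
    · have : sgn k = false := by simp [hsgn, hp]
      rw [this]
      simp only [Bool.false_eq_true, if_neg, ite_false]
      rcases (show v k ≠ v (k + 1) ∧ (negAdj G (v k) (v (k + 1)) ∨ posAdj G (v k) (v (k + 1))) from hadj k).2 with hng | hps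
      · exact hng
      · exact absurd hps hp
  · intro k l hkl hs
    exfalso
    rw [Sym2.eq_iff] at hs
    rcases hs with ⟨h1, _⟩ | ⟨h1, h2⟩
    · exact hkl (hinj h1)
    · have e1 : k = l + 1 := hinj h1
      have e2 : k + 1 = l := hinj h2
      have hmod : ∀ a : ℕ, a < m + 2 → (a + 1) % (m + 2) = if a = m + 1 then 0 else a + 1 := by
        intro a ha
        split
        · next h => rw [h, show m + 1 + 1 = m + 2 from rfl, Nat.mod_self]
        · next h => exact Nat.mod_eq_of_lt (by omega)
      have e1v := congrArg Fin.val e1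
      have e2v := congrArg Fin.val e2
      rw [Fin.add_def] at e1v e2v
      simp only [Fin.val_one] at e1v e2v
      rw [hmod _ l.isLt] at e1v
      rw [hmod _ k.isLt] at e2v
      have hk := k.isLt
      have hl := l.isLt
      split_ifs at e1v e2v <;> omega
  · have hsum : par G W = ∑ k : Fin (m + 2), wf G (v k) (v (k + 1)) := by
      rw [par_eq_sum_range, hm, ← Fin.sum_univ_eq_sum_range]
      apply Finset.sum_congr rfl
      intro k _
      rw [hv1]
    have hsum2 : (∑ k : Fin (m + 2), wf G (v k) (v (k + 1)))
        = ((univ.filter (fun k => sgn k = true)).card : ZMod 2) := by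
      rw [← Finset.sum_boole]
      apply Finset.sum_congr rfl
      intro k _
      unfold wf
      by_cases hp : posAdj G (v k) (v (k + 1))
      · rw [if_pos hp, if_pos (by simp [hsgn, hp])]
      · rw [if_neg hp, if_neg (by simp [hsgn, hp])]
    rcases Nat.mod_two_eq_zero_or_one (univ.filter (fun k => sgn k = true)).card with h0 | h1
    · exfalso
      have hdvd : (2 : ℕ) ∣ (univ.filter (fun k => sgn k = true)).card :=
        Nat.dvd_of_mod_eq_zero h0
      have : ((univ.filter (fun k => sgn k = true)).card : ZMod 2) = 0 :=
        (ZMod.natCast_eq_zero_iff _ _).mpr hdvd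
      rw [hpar] at hsum
      rw [hsum2, this] at hsum
      exact one_ne_zero hsum
    · exact h1

lemma closed_par (G : SignedGraphH n) (hodd : ¬ HasOddPositiveCycle G) :
    ∀ (N : ℕ) (u : Fin n) (W : (SG G).Walk u u), W.length ≤ N → par G W = 0 := by
  have hz2 : ∀ x : ZMod 2, x + x = 0 := by decide
  intro N
  induction N with
  | zero =>
    intro u W hW
    rw [par_eq_sum_range]
    have : W.length = 0 := by omega
    rw [this]
    simp
  | succ N IH =>
    intro u W hW
    by_cases hnd : W.support.tail.Nodup
    · rcases Nat.lt_or_ge W.length 3 with h3 | h3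
      · have : W.length = 0 ∨ W.length = 1 ∨ W.length = 2 := by omega
        rcases this with h | h | h
        · rw [par_eq_sum_range, h]; simp
        · exfalso
          have hadj := W.adj_getVert_succ (show 0 < W.length by omega)
          rw [Walk.getVert_zero] at hadj
          have h1 : W.getVert 1 = u := by
            conv_lhs => rw [show (1 : ℕ) = W.length from h.symm]
            exact W.getVert_length
          rw [h1] at hadj
          exact (SG G).loopless.irrefl u hadj
        · rw [par_eq_sum_range, h]
          rw [Finset.sum_range_succ, Finset.sum_range_succ, Finset.sum_range_zero]
          have h0 : W.getVert 0 = u := W.getVert_zero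
          have h2 : W.getVert 2 = u := by
            conv_lhs => rw [show (2 : ℕ) = W.length from h.symm]
            exact W.getVert_length
          rw [h0, h2, zero_add, wf_symm]
          exact hz2 _
      · by_contra hne0
        have h1 : par G W = 1 := by
          have hx : ∀ x : ZMod 2, x = 0 ∨ x = 1 := by decide
          rcases hx (par G W) with h | h
          · exact absurd h hne0
          · exact h
        exact hodd (cycle_to_odd G W hnd h3 h1)
    · have key : ∀ (x : Fin n) (W' : (SG G).Walk x x), W'.length ≤ N + 1 →
          2 ≤ List.count x W'.support.tail → par G W' = 0 := by
        intro x W' hlen hcnt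
        cases W' with
        | nil => simp at hcnt
        | cons hadj R =>
          rename_i y
          have htl : (Walk.cons hadj R).support.tail = R.support := by
            rw [Walk.support_cons]
            rfl
          rw [htl] at hcnt
          have hxR : x ∈ R.support := by
            rw [← List.count_pos_iff]
            omega
          have hspec := R.take_spec hxR
          have hlenAB : (R.takeUntil x hxR).length + (R.dropUntil x hxR).length = R.length := by
            conv_rhs => rw [← hspec]
            rw [Walk.length_append]
          have hcntA : List.count x (R.takeUntil x hxR).support = 1 :=
            R.count_support_takeUntil_eq_one hxR
          have hcntsplit : List.count x R.support
              = 1 + List.count x (R.dropUntil x hxR).support.tail := by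
            conv_lhs => rw [← hspec]
            rw [Walk.support_append, List.count_append, hcntA]
          have hBpos : 1 ≤ (R.dropUntil x hxR).length := by
            by_contra h0
            have hB0 : (R.dropUntil x hxR).length = 0 := by omega
            have hBnil : (R.dropUntil x hxR).support = [x] :=
              Walk.nil_iff_support_eq.mp (Walk.nil_iff_length_eq.mpr hB0)
            rw [hBnil] at hcntsplit
            simp at hcntsplit
            omega
          have hlenR : R.length ≤ N := by
            have : (Walk.cons hadj R).length = R.length + 1 := Walk.length_cons _ _
            omega
          have e1 : par G (Walk.cons hadj R)
              = par G (Walk.cons hadj (R.takeUntil x hxR)) + par G (R.dropUntil x hxR) := by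
            rw [par_cons]
            conv_lhs => rw [← hspec]
            rw [par_append, par_cons]
            ring
          have hA0 : par G (Walk.cons hadj (R.takeUntil x hxR)) = 0 := by
            apply IH
            rw [Walk.length_cons]
            omega
          have hB0 : par G (R.dropUntil x hxR) = 0 := by
            apply IH
            omega
          rw [e1, hA0, hB0, add_zero]
      have hx2 : ∃ x, 2 ≤ List.count x W.support.tail := by
        by_contra hc
        push_neg at hc
        exact hnd (List.nodup_iff_count_le_one.mpr (fun a => by have := hc a; omega))
      obtain ⟨x, hx2⟩ := hx2
      have hxs : x ∈ W.support := by
        have hmem : x ∈ W.support.tail := by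
          rw [← List.count_pos_iff]
          omega
        rw [W.support_eq_cons]
        exact List.mem_cons_of_mem _ hmem
      have hrw : par G (W.rotate x hxs) = par G W := par_rotate G W hxs
      have hcnt' : 2 ≤ List.count x (W.rotate x hxs).support.tail := by
        have hperm := (Walk.support_rotate W x hxs).perm
        rw [List.Perm.count_eq hperm]
        exact hx2
      rw [← hrw]
      exact key x (W.rotate x hxs) (by rw [my_length_rotate]; omega) hcnt'

lemma walks_same_par (G : SignedGraphH n) (hodd : ¬ HasOddPositiveCycle G)
    {a b : Fin n} (P Q : (SG G).Walk a b) : par G P = par G Q := by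
  have h0 := closed_par G hodd (P.append Q.reverse).length a (P.append Q.reverse) le_rfl
  rw [par_append, par_reverse] at h0
  have hz : ∀ x y : ZMod 2, x + y = 0 → x = y := by decide
  exact hz _ _ h0

lemma par_eq_par_of_same (G : SignedGraphH n) (hodd : ¬ HasOddPositiveCycle G)
    {a a' b : Fin n} (h : a = a') (P : (SG G).Walk a b) (Q : (SG G).Walk a' b) :
    par G P = par G Q := by
  subst h
  exact walks_same_par G hodd P Q

noncomputable def rep (G : SignedGraphH n) (i : Fin n) : Fin n :=
  ((SG G).connectedComponentMk i).out

lemma reach_rep (G : SignedGraphH n) (i : Fin n) : (SG G).Reachable (rep G i) i :=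
  SimpleGraph.ConnectedComponent.exact (Quot.out_eq _)

noncomputable def phi (G : SignedGraphH n) (i : Fin n) : ZMod 2 :=
  par G (reach_rep G i).some

lemma phi_adj (G : SignedGraphH n) (hodd : ¬ HasOddPositiveCycle G) {i j : Fin n}
    (hadj : (SG G).Adj i j) : phi G j = phi G i + wf G i j := by
  have hrep : rep G i = rep G j := by
    unfold rep
    exact congrArg _ (SimpleGraph.ConnectedComponent.sound hadj.reachable)
  have hP : phi G j
      = par G (((reach_rep G i).some).append (Walk.cons hadj Walk.nil)) := by
    unfold phi
    exact (par_eq_par_of_same G hodd hrep _ _).symm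
  rw [hP, par_append, par_cons, par_nil, add_zero]
  rfl

noncomputable def sigma (G : SignedGraphH n) (i : Fin n) : ℝ :=
  if phi G i = 0 then 1 else -1

lemma sigma_pm (G : SignedGraphH n) (i : Fin n) : sigma G i = 1 ∨ sigma G i = -1 := by
  unfold sigma; split <;> simp

lemma sigma_ne_zero (G : SignedGraphH n) (i : Fin n) : sigma G i ≠ 0 := by
  rcases sigma_pm G i with h | h <;> rw [h] <;> norm_num

lemma not_posAdj_of_neg (G : SignedGraphH n) (hne : ∀ p ∈ G.Eneg, p.2 < p.1)
    (hodd : ¬ HasOddPositiveCycle G) :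
    ∀ p ∈ G.Eneg, ¬ posAdj G p.1 p.2 := by
  rintro ⟨i, j⟩ hp hpos
  apply hodd
  have hij : j ≠ i := ne_of_lt (hne _ hp)
  refine ⟨0, ![i, j], ![true, false], ?_, ?_, ?_, ?_⟩
  · intro a b hab
    fin_cases a <;> fin_cases b <;> simp_all
  · intro k
    fin_cases k
    · simpa [posAdj] using hpos
    · have h10 : ((1 : Fin 2) + 1) = 0 := rfl
      simpa [h10] using Or.inr hp
  · intro k l hkl _
    fin_cases k <;> fin_cases l <;> simp_all
  · decide

lemma sigma_neg (G : SignedGraphH n) (hne : ∀ p ∈ G.Eneg, p.2 < p.1)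
    (hodd : ¬ HasOddPositiveCycle G) :
    ∀ p ∈ G.Eneg, sigma G p.1 = sigma G p.2 := by
  rintro ⟨i, j⟩ hp
  have hij : j < i := hne _ hp
  have hadj : (SG G).Adj i j := show i ≠ j ∧ (negAdj G i j ∨ posAdj G i j) from ⟨(ne_of_lt hij).symm, Or.inl (Or.inl hp)⟩
  have hw : wf G i j = 0 := if_neg (not_posAdj_of_neg G hne hodd _ hp)
  have hphi := phi_adj G hodd hadj
  rw [hw, add_zero] at hphi
  show sigma G i = sigma G j
  unfold sigma
  rw [hphi]

lemma sigma_pos (G : SignedGraphH n) (hpe : ∀ p ∈ G.Epos, p.2 < p.1)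
    (hodd : ¬ HasOddPositiveCycle G) :
    ∀ p ∈ G.Epos, sigma G p.1 = -sigma G p.2 := by
  rintro ⟨i, j⟩ hp
  have hij : j < i := hpe _ hp
  have hadj : (SG G).Adj i j := show i ≠ j ∧ (negAdj G i j ∨ posAdj G i j) from ⟨(ne_of_lt hij).symm, Or.inr (Or.inl hp)⟩
  have hw : wf G i j = 1 := if_pos (Or.inl hp)
  have hphi := phi_adj G hodd hadj
  rw [hw] at hphi
  show sigma G i = -sigma G j
  have hx : ∀ x : ZMod 2, x = 0 ∨ x = 1 := by decide
  unfold sigma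
  rcases hx (phi G i) with h0 | h1
  · rw [h0] at hphi
    rw [h0, hphi]
    norm_num
  · rw [h1] at hphi
    have : phi G j = 0 := by rw [hphi]; decide
    rw [h1, this]
    norm_num

lemma entry_mem (G : SignedGraphH n) (hne : ∀ p ∈ G.Eneg, p.2 < p.1)
    (hpe : ∀ p ∈ G.Epos, p.2 < p.1) (x : Fin n) (e : EdgeIdx G) :
    incidenceMatrix G x e = 1 ∨ incidenceMatrix G x e = 0 ∨ incidenceMatrix G x e = -1 := by
  rcases e with ⟨p, hp⟩ | ⟨p, hp⟩ | ⟨i, hi⟩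
  · have hd : p.2 ≠ p.1 := ne_of_lt (hne _ hp)
    simp only [incidenceMatrix]
    split_ifs <;> simp_all <;> norm_num
  · have hd : p.2 ≠ p.1 := ne_of_lt (hpe _ hp)
    simp only [incidenceMatrix]
    split_ifs <;> simp_all <;> norm_num
  · simp only [incidenceMatrix]
    split_ifs <;> norm_num

lemma sum_indicator {k : ℕ} (f : Fin k → Fin n) (hf : Function.Injective f)
    (a : Fin n) (ia : Fin k) (hia : f ia = a) (σ : Fin n → ℝ) :
    ∑ i, (if f i = a then σ (f i) else 0) = σ a := by
  rw [Finset.sum_eq_single ia]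
  · rw [if_pos hia, hia]
  · intro i _ hi
    rw [if_neg]
    intro hfi
    exact hi (hf (hfi.trans hia.symm))
  · intro h
    exact absurd (Finset.mem_univ ia) h

lemma TU_of_not_odd (G : SignedGraphH n) (hne : ∀ p ∈ G.Eneg, p.2 < p.1)
    (hpe : ∀ p ∈ G.Epos, p.2 < p.1) (hodd : ¬ HasOddPositiveCycle G) :
    IsTotallyUnimodular (incidenceMatrix G) := by
  intro k
  induction k using Nat.strong_induction_on with
  | _ k IH =>
  rcases k with _ | k
  · intro f g hf hg
    left
    exact Matrix.det_isEmpty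
  · intro f g hf hg
    set B := (incidenceMatrix G).submatrix f g with hB
    by_cases h1 : ∃ c, ∀ i, B i c = 0
    · obtain ⟨c, hc⟩ := h1
      right; left
      exact Matrix.det_eq_zero_of_column_eq_zero c hc
    by_cases h2 : ∃ c i0, B i0 c ≠ 0 ∧ ∀ i, i ≠ i0 → B i c = 0
    · obtain ⟨c, i0, hnz, hz⟩ := h2
      rw [Matrix.det_succ_column B c, Finset.sum_eq_single i0]
      · have hmin : B.submatrix i0.succAbove c.succAbove
            = (incidenceMatrix G).submatrix (f ∘ i0.succAbove) (g ∘ c.succAbove) := by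
          rw [hB, Matrix.submatrix_submatrix]
        have hdet := IH k (Nat.lt_succ_self k) (f ∘ i0.succAbove) (g ∘ c.succAbove)
          (hf.comp Fin.succAbove_right_injective) (hg.comp Fin.succAbove_right_injective)
        rw [← hmin] at hdet
        have hBent : B i0 c = 1 ∨ B i0 c = -1 := by
          have hent := entry_mem G hne hpe (f i0) (g c)
          have hBe : B i0 c = incidenceMatrix G (f i0) (g c) := rfl
          rw [← hBe] at hent
          rcases hent with h | h | h
          · exact Or.inl h
          · exact absurd h hnz
          · exact Or.inr h
        have hsign : ((-1 : ℝ)) ^ ((i0 : ℕ) + (c : ℕ)) = 1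
            ∨ ((-1 : ℝ)) ^ ((i0 : ℕ) + (c : ℕ)) = -1 := by
          rcases Nat.even_or_odd ((i0 : ℕ) + (c : ℕ)) with he | ho
          · exact Or.inl he.neg_one_pow
          · exact Or.inr ho.neg_one_pow
        rcases hsign with hs | hs <;> rcases hBent with hb | hb <;>
          rcases hdet with hd | hd | hd <;> rw [hs, hb, hd] <;> norm_num
      · intro i _ hne'
        rw [hz i hne']
        ring
      · intro h
        exact absurd (Finset.mem_univ i0) h
    · right; left
      push_neg at h1 h2
      apply Matrix.exists_vecMul_eq_zero_iff.mp
      refine ⟨fun i => sigma G (f i), ?_, ?_⟩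
      · intro h0
        have := congrFun h0 0
        exact sigma_ne_zero G (f 0) this
      · funext c
        obtain ⟨i1, hi1⟩ := h1 c
        obtain ⟨i2, hi2ne, hi2⟩ := h2 c i1 hi1
        have hval : ∀ i, B i c = incidenceMatrix G (f i) (g c) := fun _ => rfl
        have hgoal : (Matrix.vecMul (fun i => sigma G (f i)) B) c
            = ∑ i, sigma G (f i) * B i c := by
          simp [Matrix.vecMul, dotProduct]
        show (Matrix.vecMul (fun i => sigma G (f i)) B) c = (0 : Fin (k + 1) → ℝ) c
        rw [hgoal, Pi.zero_apply]
        rcases hgc : g c with ⟨p, hp⟩ | ⟨p, hp⟩ | ⟨x, hx⟩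
        · -- negative edge
          have hab : p.2 ≠ p.1 := ne_of_lt (hne _ hp)
          have hform : ∀ i, B i c
              = (if f i = p.1 then (1:ℝ) else 0) - (if f i = p.2 then 1 else 0) := by
            intro i
            rw [hval i, hgc]
            rfl
          have hsupp : ∀ i, B i c ≠ 0 → f i = p.1 ∨ f i = p.2 := by
            intro i hi
            by_contra hcon
            push_neg at hcon
            rw [hform i, if_neg hcon.1, if_neg hcon.2, sub_zero] at hi
            exact hi rfl
          have hex : (∃ ia, f ia = p.1) ∧ (∃ ib, f ib = p.2) := by
            rcases hsupp i1 hi1 with ha1 | hb1 <;> rcases hsupp i2 hi2 with ha2 | hb2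
            · exact absurd (hf (ha1.trans ha2.symm)) (fun h => hi2ne h.symm)
            · exact ⟨⟨i1, ha1⟩, ⟨i2, hb2⟩⟩
            · exact ⟨⟨i2, ha2⟩, ⟨i1, hb1⟩⟩
            · exact absurd (hf (hb1.trans hb2.symm)) (fun h => hi2ne h.symm)
          obtain ⟨⟨ia, hia⟩, ⟨ib, hib⟩⟩ := hex
          have : ∑ i, sigma G (f i) * B i c
              = (∑ i, (if f i = p.1 then sigma G (f i) else 0))
                - (∑ i, (if f i = p.2 then sigma G (f i) else 0)) := by
            rw [← Finset.sum_sub_distrib]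
            apply Finset.sum_congr rfl
            intro i _
            rw [hform i]
            rw [mul_sub, mul_ite, mul_ite]; simp
          rw [this, sum_indicator f hf _ ia hia, sum_indicator f hf _ ib hib]
          rw [sigma_neg G hne hodd p hp]
          exact sub_self _
        · -- positive edge
          have hab : p.2 ≠ p.1 := ne_of_lt (hpe _ hp)
          have hform : ∀ i, B i c
              = (if f i = p.1 then (1:ℝ) else 0) + (if f i = p.2 then 1 else 0) := by
            intro i
            rw [hval i, hgc]
            rfl
          have hsupp : ∀ i, B i c ≠ 0 → f i = p.1 ∨ f i = p.2 := by
            intro i hi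
            by_contra hcon
            push_neg at hcon
            rw [hform i, if_neg hcon.1, if_neg hcon.2, add_zero] at hi
            exact hi rfl
          have hex : (∃ ia, f ia = p.1) ∧ (∃ ib, f ib = p.2) := by
            rcases hsupp i1 hi1 with ha1 | hb1 <;> rcases hsupp i2 hi2 with ha2 | hb2
            · exact absurd (hf (ha1.trans ha2.symm)) (fun h => hi2ne h.symm)
            · exact ⟨⟨i1, ha1⟩, ⟨i2, hb2⟩⟩
            · exact ⟨⟨i2, ha2⟩, ⟨i1, hb1⟩⟩
            · exact absurd (hf (hb1.trans hb2.symm)) (fun h => hi2ne h.symm)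
          obtain ⟨⟨ia, hia⟩, ⟨ib, hib⟩⟩ := hex
          have : ∑ i, sigma G (f i) * B i c
              = (∑ i, (if f i = p.1 then sigma G (f i) else 0))
                + (∑ i, (if f i = p.2 then sigma G (f i) else 0)) := by
            rw [← Finset.sum_add_distrib]
            apply Finset.sum_congr rfl
            intro i _
            rw [hform i]
            rw [mul_add, mul_ite, mul_ite]; simp
          rw [this, sum_indicator f hf _ ia hia, sum_indicator f hf _ ib hib]
          rw [sigma_pos G hpe hodd p hp]
          exact neg_add_cancel _
        · -- half edge : impossible
          exfalso
          have hform : ∀ i, B i c = (if f i = x then (1:ℝ) else 0) := by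
            intro i
            rw [hval i, hgc]
            rfl
          have h1' : f i1 = x := by
            by_contra hcon
            rw [hform i1, if_neg hcon] at hi1
            exact hi1 rfl
          have h2' : f i2 = x := by
            by_contra hcon
            rw [hform i2, if_neg hcon] at hi2
            exact hi2 rfl
          exact hi2ne (hf (h2'.trans h1'.symm))

lemma fin_one_ne_zero' {m : ℕ} : (1 : Fin (m + 2)) ≠ 0 := by
  intro h
  have := congrArg Fin.val h
  simp only [Fin.val_one, Fin.val_zero] at this
  omega

open Fin.NatCast in
lemma perm_classify {m : ℕ} (σ : Equiv.Perm (Fin (m + 2)))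
    (h : ∀ k, σ k = k ∨ σ k = k + 1) : σ = 1 ∨ σ = finRotate (m + 2) := by
  by_cases hid : ∀ k, σ k = k
  · left
    ext k
    rw [hid k]
    rfl
  · right
    push_neg at hid
    obtain ⟨k0, hk0⟩ := hid
    have hk0' : σ k0 = k0 + 1 := (h k0).resolve_left hk0
    have step : ∀ t : Fin (m + 2), σ t = t + 1 → σ (t + 1) = t + 1 + 1 := by
      intro t ht
      rcases h (t + 1) with h1 | h1
      · exfalso
        have heq : σ (t + 1) = σ t := by rw [h1, ht]
        have heq2 := σ.injective heq
        have h10 : (1 : Fin (m + 2)) = 0 :=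
          add_left_cancel (a := t) (by rw [add_zero]; exact heq2)
        exact fin_one_ne_zero' h10
      · exact h1
    have all : ∀ j : ℕ, σ (k0 + (j : Fin (m + 2))) = k0 + (j : Fin (m + 2)) + 1 := by
      intro j
      induction j with
      | zero => simpa using hk0'
      | succ j ih =>
        have hc : ((j + 1 : ℕ) : Fin (m + 2)) = (j : Fin (m + 2)) + 1 := by
          push_cast
          ring
        rw [hc, ← add_assoc]
        exact step _ ih
    ext k
    have hk : k0 + ((k - k0).val : Fin (m + 2)) = k := by
      rw [Fin.cast_val_eq_self]
      abel
    have := all (k - k0).val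
    rw [hk] at this
    rw [this]
    rw [finRotate_succ_apply]

lemma det_cyclic {m : ℕ} (a b : Fin (m + 2) → ℝ) :
    (Matrix.of (fun i k : Fin (m + 2) =>
        if i = k then a k else if i = k + 1 then b k else 0)).det
      = ∏ k, a k + (-1 : ℝ) ^ (m + 1) * ∏ k, b k := by
  have hone : (1 : Fin (m + 2)) ≠ 0 := fin_one_ne_zero'
  have hsucc_ne : ∀ k : Fin (m + 2), k + 1 ≠ k := by
    intro k h
    have : (1 : Fin (m + 2)) = 0 := by
      apply add_left_cancel (a := k)
      rw [add_zero]
      exact h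
    exact hone this
  have hne1 : (1 : Equiv.Perm (Fin (m + 2))) ≠ finRotate (m + 2) := by
    intro h
    have h0 := congrArg (fun σ : Equiv.Perm (Fin (m + 2)) => σ 0) h
    simp only [Equiv.Perm.coe_one, id_eq, finRotate_succ_apply, zero_add] at h0
    exact hone h0.symm
  rw [Matrix.det_apply]
  rw [← Finset.sum_subset
    (Finset.subset_univ ({1, finRotate (m + 2)} : Finset (Equiv.Perm (Fin (m + 2)))))]
  · rw [Finset.sum_insert (by simpa using hne1), Finset.sum_singleton]
    have t1 : ∀ i : Fin (m + 2),
        Matrix.of (fun i k : Fin (m + 2) =>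
          if i = k then a k else if i = k + 1 then b k else 0) ((1 : Equiv.Perm (Fin (m + 2))) i) i
          = a i := by
      intro i
      simp [Matrix.of_apply]
    have t2 : ∀ i : Fin (m + 2),
        Matrix.of (fun i k : Fin (m + 2) =>
          if i = k then a k else if i = k + 1 then b k else 0) (finRotate (m + 2) i) i
          = b i := by
      intro i
      rw [finRotate_succ_apply]
      simp only [Matrix.of_apply]
      rw [if_neg (hsucc_ne i)]
      simp
    rw [Finset.prod_congr rfl (fun i _ => t1 i), Finset.prod_congr rfl (fun i _ => t2 i)]
    rw [Equiv.Perm.sign_one, sign_finRotate]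
    simp only [one_smul, Units.smul_def, zsmul_eq_mul]
    push_cast
    ring
  · intro σ _ hσ
    simp only [Finset.mem_insert, Finset.mem_singleton] at hσ
    push_neg at hσ
    have hex : ∃ k, ¬(σ k = k ∨ σ k = k + 1) := by
      by_contra hall
      push_neg at hall
      rcases perm_classify σ (fun k => by
          rcases Classical.em (σ k = k) with h1 | h1
          · exact Or.inl h1
          · exact Or.inr ((hall k).resolve_left h1)) with h | h
      · exact hσ.1 h
      · exact hσ.2 h
    obtain ⟨k, hk⟩ := hex
    push_neg at hk
    have hz : Matrix.of (fun i k : Fin (m + 2) =>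
        if i = k then a k else if i = k + 1 then b k else 0) (σ k) k = 0 := by
      simp only [Matrix.of_apply]
      rw [if_neg hk.1, if_neg hk.2]
    have hp0 : (∏ i, Matrix.of (fun i k : Fin (m + 2) =>
        if i = k then a k else if i = k + 1 then b k else 0) (σ i) i) = 0 :=
      Finset.prod_eq_zero (Finset.mem_univ k) hz
    rw [hp0, smul_zero]

def tagOf (G : SignedGraphH n) : EdgeIdx G → (Bool × Sym2 (Fin n)) ⊕ Fin n
  | .inl ⟨p, _⟩ => .inl (false, s(p.1, p.2))
  | .inr (.inl ⟨p, _⟩) => .inl (true, s(p.1, p.2))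
  | .inr (.inr ⟨i, _⟩) => .inr i

lemma not_TU_of_odd (G : SignedGraphH n) (hodd : HasOddPositiveCycle G) :
    ¬ IsTotallyUnimodular (incidenceMatrix G) := by
  intro hTU
  obtain ⟨m, v, sgn, hinj, hmem, hdist, hcount⟩ := hodd
  have hvne : ∀ k : Fin (m + 2), v k ≠ v (k + 1) := by
    intro k h
    have h2 := hinj h
    have h3 : (1 : Fin (m + 2)) = 0 := by
      apply add_left_cancel (a := k)
      rw [add_zero]
      exact h2.symm
    exact fin_one_ne_zero' h3
  have hvne' : ∀ k : Fin (m + 2), v (k + 1) ≠ v k := fun k h => hvne k h.symm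
  have hcols : ∀ k : Fin (m + 2), ∃ e : EdgeIdx G,
      tagOf G e = Sum.inl (sgn k, s(v k, v (k + 1)))
      ∧ incidenceMatrix G (v k) e * incidenceMatrix G (v (k + 1)) e
          = (if sgn k then (1:ℝ) else -1)
      ∧ (incidenceMatrix G (v k) e = 1 ∨ incidenceMatrix G (v k) e = -1)
      ∧ (∀ x, x ≠ v k → x ≠ v (k + 1) → incidenceMatrix G x e = 0) := by
    intro k
    have hm := hmem k
    by_cases hs : sgn k = true
    · rw [if_pos hs] at hm
      rw [hs]
      rcases hm with h | h
      · refine ⟨.inr (.inl ⟨(v k, v (k + 1)), h⟩), ?_, ?_, ?_, ?_⟩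
        · simp [tagOf]
        · simp [incidenceMatrix, hvne k, hvne' k]
        · simp [incidenceMatrix, hvne k]
        · intro x hx1 hx2
          simp [incidenceMatrix, hx1, hx2]
      · refine ⟨.inr (.inl ⟨(v (k + 1), v k), h⟩), ?_, ?_, ?_, ?_⟩
        · simp only [tagOf]
          rw [Sym2.eq_swap]
        · simp [incidenceMatrix, hvne k, hvne' k]
        · simp [incidenceMatrix, hvne k]
        · intro x hx1 hx2
          simp [incidenceMatrix, hx1, hx2]
    · rw [if_neg hs] at hm
      have hs' : sgn k = false := by
        cases hsk : sgn k
        · rfl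
        · exact absurd hsk hs
      rw [hs']
      rcases hm with h | h
      · refine ⟨.inl ⟨(v k, v (k + 1)), h⟩, ?_, ?_, ?_, ?_⟩
        · simp [tagOf]
        · simp [incidenceMatrix, hvne k, hvne' k]
        · simp [incidenceMatrix, hvne k]
        · intro x hx1 hx2
          simp [incidenceMatrix, hx1, hx2]
      · refine ⟨.inl ⟨(v (k + 1), v k), h⟩, ?_, ?_, ?_, ?_⟩
        · simp only [tagOf]
          rw [Sym2.eq_swap]
        · simp [incidenceMatrix, hvne k, hvne' k]
        · simp [incidenceMatrix, hvne k]
        · intro x hx1 hx2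
          simp [incidenceMatrix, hx1, hx2]
  choose gcol hg1 hg2 hg3 hg4 using hcols
  have hginj : Function.Injective gcol := by
    intro k l hkl
    by_contra hne'
    have ht : (Sum.inl (sgn k, s(v k, v (k + 1)))
        : (Bool × Sym2 (Fin n)) ⊕ Fin n) = Sum.inl (sgn l, s(v l, v (l + 1))) := by
      rw [← hg1 k, ← hg1 l, hkl]
    have ht2 := Sum.inl.inj ht
    have hsgn_eq : sgn k = sgn l := congrArg Prod.fst ht2
    have hsym : s(v k, v (k + 1)) = s(v l, v (l + 1)) := congrArg Prod.snd ht2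
    exact hdist k l hne' hsym hsgn_eq
  set a : Fin (m + 2) → ℝ := fun k => incidenceMatrix G (v k) (gcol k) with ha
  set b : Fin (m + 2) → ℝ := fun k => incidenceMatrix G (v (k + 1)) (gcol k) with hb
  have hsub : (incidenceMatrix G).submatrix v gcol
      = Matrix.of (fun i k : Fin (m + 2) =>
          if i = k then a k else if i = k + 1 then b k else 0) := by
    ext i k
    simp only [Matrix.submatrix_apply, Matrix.of_apply]
    by_cases h1 : i = k
    · rw [if_pos h1, h1]
    · rw [if_neg h1]
      by_cases h2 : i = k + 1
      · rw [if_pos h2, h2]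
      · rw [if_neg h2]
        exact hg4 k (v i) (fun hh => h1 (hinj hh)) (fun hh => h2 (hinj hh))
  have hdet := hTU (m + 2) v gcol hinj hginj
  rw [hsub, det_cyclic] at hdet
  set p := (univ.filter (fun k => sgn k = true)).card with hpdef
  set q := (univ.filter (fun k => ¬(sgn k = true))).card with hqdef
  have hprod_ab : (∏ k, a k) * (∏ k, b k) = (-1 : ℝ) ^ q := by
    rw [← Finset.prod_mul_distrib]
    rw [Finset.prod_congr rfl (fun k _ => hg2 k)]
    rw [← Finset.prod_filter_mul_prod_filter_not univ (fun k => sgn k = true)]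
    rw [Finset.prod_congr rfl (fun k hk => if_pos (Finset.mem_filter.mp hk).2)]
    rw [Finset.prod_congr rfl (fun k hk => if_neg (Finset.mem_filter.mp hk).2)]
    rw [Finset.prod_const_one, Finset.prod_const, one_mul]
  have hA2 : (∏ k, a k) = 1 ∨ (∏ k, a k) = -1 := by
    have hsq : (∏ k, a k) ^ 2 = 1 := by
      rw [← Finset.prod_pow]
      have hone' : ∀ k ∈ (univ : Finset (Fin (m + 2))), a k ^ 2 = 1 := by
        intro k _
        rcases hg3 k with h | h
        · have h' : a k = 1 := h
          rw [h']; norm_num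
        · have h' : a k = -1 := h
          rw [h']; norm_num
      rw [Finset.prod_congr rfl hone']
      exact Finset.prod_const_one
    have hfac : ((∏ k, a k) - 1) * ((∏ k, a k) + 1) = 0 := by
      have : ((∏ k, a k) - 1) * ((∏ k, a k) + 1) = (∏ k, a k) ^ 2 - 1 := by ring
      rw [this, hsq]
      ring
    rcases mul_eq_zero.mp hfac with h | h
    · left; linarith
    · right; linarith
  have hpq : p + q = m + 2 := by
    rw [hpdef, hqdef, Finset.card_filter_add_card_filter_not]
    simp
  have hpow_p : (-1 : ℝ) ^ p = -1 := Odd.neg_one_pow (Nat.odd_iff.mpr hcount)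
  have hpow : (-1 : ℝ) ^ (m + 1) * (-1 : ℝ) ^ q = 1 := by
    have h1 : (-1 : ℝ) ^ (m + 1) * (-1 : ℝ) ^ q * (-1 : ℝ) ^ p
        = (-1 : ℝ) ^ ((m + 1) + q + p) := by
      rw [← pow_add, ← pow_add]
    have h2 : (m + 1) + q + p = 2 * (m + 1) + 1 := by omega
    have h3 : (-1 : ℝ) ^ ((m + 1) + q + p) = -1 := by
      rw [h2]
      exact Odd.neg_one_pow ⟨m + 1, by ring⟩
    rw [hpow_p, h3] at h1
    linarith
  have hB_eq : (∏ k, b k) = (-1 : ℝ) ^ q * (∏ k, a k) := by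
    rcases hA2 with h | h <;> rw [h] at hprod_ab ⊢ <;> linarith
  rw [hB_eq] at hdet
  have hcollapse : (∏ k, a k) + (-1 : ℝ) ^ (m + 1) * ((-1 : ℝ) ^ q * ∏ k, a k)
      = 2 * ∏ k, a k := by
    rw [← mul_assoc, hpow, one_mul]
    ring
  rw [hcollapse] at hdet
  rcases hA2 with h | h <;> rw [h] at hdet <;> norm_num at hdet


end HTaux

/-- Heller–Tompkins / Hoffman–Gale: the subgraph `𝒢'` obtained by removing
half-edges is balanced iff the incidence matrix `I(𝒢)` is totally unimodular. -/
theorem balanced_iff_totallyUnimodular {n : ℕ} (G : SignedGraphH n)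
    (hne : ∀ p ∈ G.Eneg, p.2 < p.1) (hpe : ∀ p ∈ G.Epos, p.2 < p.1) :
    ¬ HasOddPositiveCycle G ↔ IsTotallyUnimodular (incidenceMatrix G) := by
  constructor
  · intro hodd
    exact HTaux.TU_of_not_odd G hne hpe hodd
  · intro hTU hodd
    exact HTaux.not_TU_of_odd G hodd hTU
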